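/- Let R be a Borel measure on ℝ^d with R({0}) = 0 and ∫_{ℝ^d} (|x|² ∧ 1) R(dx) < ∞ and ∫_{|x|>1} log|x| R(dx) < ∞ (class 𝔐^log). Define R^log({0}) = 0 and R^log(A) = ∫ 1_A(x/|x|²) |x|² (1 + |log|x||)^{κ(|x|)} R(dx), where κ(t) = 1 for t ≥ 1 and κ(t) = -1 for t ∈ [0,1). Then R^log ∈ 𝔐^log and (R^log)^log = R. -/

import Mathlib

open MeasureTheory ENNReal Filter Topology Set

noncomputable section

abbrev Rd (d : ℕ) := EuclideanSpace ℝ (Fin d)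

/-- The spherical inversion map `x ↦ x / |x|²` (sending `0` to `0`). -/
def sphInv {d : ℕ} (x : Rd d) : Rd d := (‖x‖ ^ 2)⁻¹ • x

/-- The β-inversion of a measure `M`:
`M^β(A) = ∫ 1_A(x/|x|²) |x|^{2+β} M(dx)`. -/
def betaInv {d : ℕ} (β : ℝ) (M : Measure (Rd d)) : Measure (Rd d) :=
  Measure.map sphInv (M.withDensity fun x => ENNReal.ofReal (‖x‖ ^ (2 + β)))

/-- `M ∈ 𝔐^β`: `M({0}) = 0` and `∫ (|x|² ∧ |x|^β) M(dx) < ∞`. -/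
def MemM {d : ℕ} (β : ℝ) (M : Measure (Rd d)) : Prop :=
  M {0} = 0 ∧ ∫⁻ x, ENNReal.ofReal (min (‖x‖ ^ (2 : ℝ)) (‖x‖ ^ β)) ∂M < ⊤

/-- `κ(t) = 1` for `t ≥ 1` and `κ(t) = -1` for `t < 1`. -/
def kappa (t : ℝ) : ℝ := if 1 ≤ t then 1 else -1

/-- `R ∈ 𝔐^log`: `R({0}) = 0`, `∫ (|x|² ∧ 1) R(dx) < ∞`, and
`∫_{|x|>1} log|x| R(dx) < ∞`. -/
def MemMlog {d : ℕ} (R : Measure (Rd d)) : Prop :=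
  R {0} = 0 ∧ (∫⁻ x, ENNReal.ofReal (min (‖x‖ ^ (2 : ℝ)) 1) ∂ R < ⊤) ∧
    ∫⁻ x in {x : Rd d | 1 < ‖x‖}, ENNReal.ofReal (Real.log ‖x‖) ∂ R < ⊤

/-- The log-inversion: `R^log(A) = ∫ 1_A(x/|x|²) |x|² (1+|log|x||)^{κ(|x|)} R(dx)`. -/
def logInv {d : ℕ} (R : Measure (Rd d)) : Measure (Rd d) :=
  Measure.map sphInv (R.withDensity fun x =>
    ENNReal.ofReal (‖x‖ ^ (2 : ℝ) * (1 + |Real.log ‖x‖|) ^ kappa ‖x‖))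

/-! ### Auxiliary lemmas -/

lemma sphInv_zero {d : ℕ} : sphInv (0 : Rd d) = 0 := by simp [sphInv]

lemma norm_sphInv {d : ℕ} (x : Rd d) : ‖sphInv x‖ = ‖x‖⁻¹ := by
  rcases eq_or_ne x 0 with rfl | hx
  · simp [sphInv]
  · have h : (0:ℝ) < ‖x‖ := norm_pos_iff.2 hx
    rw [sphInv, norm_smul, Real.norm_eq_abs, abs_inv, abs_pow, abs_norm]
    field_simp

lemma sphInv_sphInv {d : ℕ} (x : Rd d) : sphInv (sphInv x) = x := by
  rcases eq_or_ne x 0 with rfl | hx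
  · simp [sphInv]
  · have h : (0:ℝ) < ‖x‖ := norm_pos_iff.2 hx
    rw [show sphInv (sphInv x) = (‖sphInv x‖ ^ 2)⁻¹ • sphInv x from rfl, norm_sphInv, sphInv,
      smul_smul]
    rw [show ((‖x‖⁻¹ ^ 2)⁻¹ * (‖x‖ ^ 2)⁻¹ : ℝ) = 1 by field_simp]
    simp

lemma measurable_sphInv {d : ℕ} : Measurable (sphInv (d := d)) :=
  ((measurable_norm.pow_const 2).inv).smul measurable_id

lemma sphInv_eq_zero {d : ℕ} {x : Rd d} : sphInv x = 0 ↔ x = 0 := by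
  constructor
  · intro h
    have := sphInv_sphInv x
    rw [h, sphInv_zero] at this
    exact this.symm
  · rintro rfl; exact sphInv_zero

/-- The real-valued density as a function of the radius. -/
def grr (r : ℝ) : ℝ := r ^ (2:ℝ) * (1 + |Real.log r|) ^ kappa r

lemma one_add_abs_log_pos (r : ℝ) : (0:ℝ) < 1 + |Real.log r| := by positivity

lemma grr_nonneg {r : ℝ} (hr : 0 ≤ r) : 0 ≤ grr r :=
  mul_nonneg (Real.rpow_nonneg hr _) (Real.rpow_nonneg (one_add_abs_log_pos r).le _)

lemma grr_of_one_le {r : ℝ} (h : 1 ≤ r) : grr r = r ^ (2:ℝ) * (1 + Real.log r) := by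
  rw [grr, kappa, if_pos h, Real.rpow_one, abs_of_nonneg (Real.log_nonneg h)]

lemma grr_of_lt_one {r : ℝ} (h : r < 1) : grr r = r ^ (2:ℝ) * (1 + |Real.log r|)⁻¹ := by
  rw [grr, kappa, if_neg (not_le.2 h), Real.rpow_neg_one]

lemma grr_inv_mul {r : ℝ} (hr : 0 < r) : grr r * grr r⁻¹ = 1 := by
  have hr2 : (0:ℝ) < r ^ (2:ℝ) := Real.rpow_pos_of_pos hr _
  have hb : (0:ℝ) < 1 + |Real.log r| := one_add_abs_log_pos r
  have hlog : |Real.log r⁻¹| = |Real.log r| := by rw [Real.log_inv, abs_neg]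
  rw [grr, grr, hlog, Real.inv_rpow hr.le]
  rcases lt_trichotomy r 1 with h | rfl | h
  · have h1 : kappa r = -1 := if_neg (not_le.2 h)
    have h2 : kappa r⁻¹ = 1 := if_pos (one_le_inv_iff₀.2 ⟨hr, h.le⟩)
    rw [h1, h2]
    rw [show r ^ (2:ℝ) * (1 + |Real.log r|) ^ (-1:ℝ) * ((r ^ (2:ℝ))⁻¹ *
        (1 + |Real.log r|) ^ (1:ℝ)) = (r ^ (2:ℝ) * (r ^ (2:ℝ))⁻¹) *
        ((1 + |Real.log r|) ^ (-1:ℝ) * (1 + |Real.log r|) ^ (1:ℝ)) by ring,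
      ← Real.rpow_add hb]
    norm_num
    exact mul_inv_cancel₀ (by positivity)
  · simp
  · have h1 : kappa r = 1 := if_pos h.le
    have h2 : kappa r⁻¹ = -1 := if_neg (not_le.2 ((inv_lt_one_iff₀).2 (Or.inr h)))
    rw [h1, h2]
    rw [show r ^ (2:ℝ) * (1 + |Real.log r|) ^ (1:ℝ) * ((r ^ (2:ℝ))⁻¹ *
        (1 + |Real.log r|) ^ (-1:ℝ)) = (r ^ (2:ℝ) * (r ^ (2:ℝ))⁻¹) *
        ((1 + |Real.log r|) ^ (1:ℝ) * (1 + |Real.log r|) ^ (-1:ℝ)) by ring,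
      ← Real.rpow_add hb]
    norm_num
    exact mul_inv_cancel₀ (by positivity)

section Dens

variable {d : ℕ}

/-- The ENNReal density appearing in `logInv`. -/
def gfun (x : Rd d) : ℝ≥0∞ :=
  ENNReal.ofReal (‖x‖ ^ (2 : ℝ) * (1 + |Real.log ‖x‖|) ^ kappa ‖x‖)

lemma gfun_eq (x : Rd d) : gfun x = ENNReal.ofReal (grr ‖x‖) := rfl

lemma logInv_eq (R : Measure (Rd d)) :
    logInv R = Measure.map sphInv (R.withDensity gfun) := rfl

lemma measurable_kappa_norm : Measurable fun x : Rd d => kappa ‖x‖ := by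
  unfold kappa
  exact Measurable.ite (measurableSet_le measurable_const measurable_norm)
    measurable_const measurable_const

lemma measurable_norm_rpow_two : Measurable fun x : Rd d => ‖x‖ ^ (2:ℝ) := by
  simp_rw [Real.rpow_two]
  exact measurable_norm.pow_const 2

lemma measurable_gfun : Measurable (gfun (d := d)) := by
  apply Measurable.ennreal_ofReal
  apply measurable_norm_rpow_two.mul
  have heq : ∀ x : Rd d, (1 + |Real.log ‖x‖|) ^ kappa ‖x‖
      = Real.exp (Real.log (1 + |Real.log ‖x‖|) * kappa ‖x‖) := fun x =>
    Real.rpow_def_of_pos (one_add_abs_log_pos _) _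
  simp_rw [heq]
  exact Real.measurable_exp.comp
    ((Real.measurable_log.comp
      (measurable_const.add (Real.measurable_log.comp measurable_norm).abs)).mul
      measurable_kappa_norm)

/-- `φ x = min(|x|², 1)` as an ENNReal function. -/
def phif (x : Rd d) : ℝ≥0∞ := ENNReal.ofReal (min (‖x‖ ^ (2 : ℝ)) 1)

lemma measurable_phif : Measurable (phif (d := d)) :=
  (measurable_norm_rpow_two.min measurable_const).ennreal_ofReal

/-- `ψ = 1_{|x|>1} log|x|` as an ENNReal function. -/
def psif (x : Rd d) : ℝ≥0∞ :=
  indicator {y : Rd d | 1 < ‖y‖} (fun y => ENNReal.ofReal (Real.log ‖y‖)) x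

lemma measurable_psif : Measurable (psif (d := d)) :=
  Measurable.indicator (Real.measurable_log.comp measurable_norm).ennreal_ofReal
    (measurableSet_lt measurable_const measurable_norm)

lemma gfun_mul_sphInv {x : Rd d} (hx : x ≠ 0) : gfun x * gfun (sphInv x) = 1 := by
  have hr : (0:ℝ) < ‖x‖ := norm_pos_iff.2 hx
  rw [gfun_eq, gfun_eq, norm_sphInv, ← ENNReal.ofReal_mul (grr_nonneg hr.le),
    grr_inv_mul hr, ENNReal.ofReal_one]

lemma boundA (x : Rd d) : phif (sphInv x) * gfun x ≤ phif x + psif x := by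
  rcases eq_or_ne x 0 with rfl | hx
  · rw [sphInv_zero]
    have : phif (0 : Rd d) = 0 := by
      simp [phif, Real.zero_rpow (by norm_num : (2:ℝ) ≠ 0)]
    simp [this]
  have hr : (0:ℝ) < ‖x‖ := norm_pos_iff.2 hx
  have hmin : (0:ℝ) ≤ min (‖sphInv x‖ ^ (2:ℝ)) 1 :=
    le_min (Real.rpow_nonneg (norm_nonneg _) _) zero_le_one
  rw [phif, gfun_eq, ← ENNReal.ofReal_mul hmin, norm_sphInv]
  by_cases h1 : 1 ≤ ‖x‖
  · have hinv1 : ‖x‖⁻¹ ≤ 1 := inv_le_one_of_one_le₀ h1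
    have hmin1 : min ((‖x‖⁻¹) ^ (2:ℝ)) 1 = (‖x‖⁻¹) ^ (2:ℝ) :=
      min_eq_left (Real.rpow_le_one (inv_nonneg.2 hr.le) hinv1 (by norm_num))
    have hr2 : (0:ℝ) < ‖x‖ ^ (2:ℝ) := Real.rpow_pos_of_pos hr _
    have hprod : min ((‖x‖⁻¹) ^ (2:ℝ)) 1 * grr ‖x‖ = 1 + Real.log ‖x‖ := by
      rw [hmin1, grr_of_one_le h1, Real.inv_rpow hr.le]
      field_simp
    rw [hprod, ENNReal.ofReal_add zero_le_one (Real.log_nonneg h1)]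
    have hphix : phif x = ENNReal.ofReal 1 := by
      rw [phif, min_eq_right (Real.one_le_rpow h1 (by norm_num))]
    rw [hphix]
    gcongr
    rcases h1.lt_or_eq with h2 | h2
    · rw [psif, indicator_of_mem (by exact h2)]
    · rw [← h2, Real.log_one]
      simp
  · push_neg at h1
    have hinv1 : (1:ℝ) < ‖x‖⁻¹ := (one_lt_inv₀ hr).2 h1
    have hmin1 : min ((‖x‖⁻¹) ^ (2:ℝ)) 1 = 1 :=
      min_eq_right (Real.one_le_rpow hinv1.le (by norm_num))
    rw [hmin1, one_mul]
    have hb : grr ‖x‖ ≤ min (‖x‖ ^ (2:ℝ)) 1 := by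
      have hle : grr ‖x‖ ≤ ‖x‖ ^ (2:ℝ) := by
        rw [grr_of_lt_one h1]
        calc ‖x‖ ^ (2:ℝ) * (1 + |Real.log ‖x‖|)⁻¹ ≤ ‖x‖ ^ (2:ℝ) * 1 := by
              gcongr
              rw [inv_le_one_iff₀]
              right
              simp [abs_nonneg]
          _ = ‖x‖ ^ (2:ℝ) := mul_one _
      refine le_min hle (hle.trans ?_)
      exact (Real.rpow_le_one (norm_nonneg _) h1.le (by norm_num)).trans le_rfl
    calc ENNReal.ofReal (grr ‖x‖) ≤ phif x := ENNReal.ofReal_le_ofReal hb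
      _ ≤ phif x + psif x := le_self_add

lemma boundB (x : Rd d) : psif (sphInv x) * gfun x ≤ phif x := by
  rcases eq_or_ne x 0 with rfl | hx
  · rw [sphInv_zero, psif, indicator_of_notMem (by simp)]
    simp
  have hr : (0:ℝ) < ‖x‖ := norm_pos_iff.2 hx
  by_cases h1 : 1 ≤ ‖x‖
  · rw [psif, indicator_of_notMem]
    · simp
    · simp only [mem_setOf_eq, not_lt, norm_sphInv]
      exact inv_le_one_of_one_le₀ h1
  · push_neg at h1
    have hinv1 : (1:ℝ) < ‖x‖⁻¹ := (one_lt_inv₀ hr).2 h1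
    have hlogneg : Real.log ‖x‖ < 0 := Real.log_neg hr h1
    rw [psif, indicator_of_mem (by simpa [norm_sphInv] using hinv1), norm_sphInv,
      Real.log_inv, gfun_eq, ← ENNReal.ofReal_mul (neg_nonneg.2 hlogneg.le)]
    apply ENNReal.ofReal_le_ofReal
    rw [grr_of_lt_one h1]
    have habs : -Real.log ‖x‖ = |Real.log ‖x‖| := (abs_of_neg hlogneg).symm
    rw [habs]
    have hb : (0:ℝ) < 1 + |Real.log ‖x‖| := one_add_abs_log_pos _
    have key : |Real.log ‖x‖| * (‖x‖ ^ (2:ℝ) * (1 + |Real.log ‖x‖|)⁻¹) ≤ ‖x‖ ^ (2:ℝ) := by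
      rw [show |Real.log ‖x‖| * (‖x‖ ^ (2:ℝ) * (1 + |Real.log ‖x‖|)⁻¹)
          = ‖x‖ ^ (2:ℝ) * (|Real.log ‖x‖| * (1 + |Real.log ‖x‖|)⁻¹) by ring]
      calc ‖x‖ ^ (2:ℝ) * (|Real.log ‖x‖| * (1 + |Real.log ‖x‖|)⁻¹) ≤ ‖x‖ ^ (2:ℝ) * 1 := by
            gcongr
            rw [← div_eq_mul_inv, div_le_one hb]
            linarith
        _ = _ := mul_one _
    exact le_min key (key.trans (Real.rpow_le_one (norm_nonneg _) h1.le (by norm_num)))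

lemma lintegral_logInv (R : Measure (Rd d)) {F : Rd d → ℝ≥0∞} (hF : Measurable F) :
    ∫⁻ y, F y ∂(logInv R) = ∫⁻ x, F (sphInv x) * gfun x ∂ R := by
  rw [logInv_eq, lintegral_map hF measurable_sphInv,
    lintegral_withDensity_eq_lintegral_mul R measurable_gfun (g := fun x => F (sphInv x)) (hF.comp measurable_sphInv)]
  exact lintegral_congr fun x => mul_comm _ _

lemma logInv_apply_zero (R : Measure (Rd d)) (hR : R {0} = 0) : logInv R {0} = 0 := by
  rw [logInv_eq, Measure.map_apply measurable_sphInv (measurableSet_singleton 0)]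
  have hpre : sphInv ⁻¹' ({0} : Set (Rd d)) = {0} := by
    ext x; simp [sphInv_eq_zero]
  rw [hpre, withDensity_apply _ (measurableSet_singleton 0),
    setLIntegral_measure_zero _ _ hR]

lemma withDensity_map_sphInv (ν : Measure (Rd d)) :
    (Measure.map sphInv ν).withDensity gfun
      = Measure.map sphInv (ν.withDensity fun x => gfun (sphInv x)) := by
  ext s hs
  rw [withDensity_apply _ hs, Measure.map_apply measurable_sphInv hs,
    withDensity_apply _ (measurable_sphInv hs),
    setLIntegral_map hs measurable_gfun measurable_sphInv]

lemma logInv_logInv (R : Measure (Rd d)) (hR : R {0} = 0) : logInv (logInv R) = R := by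
  rw [logInv_eq, logInv_eq, withDensity_map_sphInv,
    Measure.map_map measurable_sphInv measurable_sphInv,
    show sphInv ∘ sphInv = id from funext sphInv_sphInv, Measure.map_id,
    ← withDensity_mul (f := gfun) (g := fun x => gfun (sphInv x)) R measurable_gfun (measurable_gfun.comp measurable_sphInv)]
  have hae : (gfun * fun x : Rd d => gfun (sphInv x)) =ᵐ[R] 1 := by
    have h0 : ∀ᵐ x ∂ R, x ∉ ({0} : Set (Rd d)) := measure_eq_zero_iff_ae_notMem.1 hR
    filter_upwards [h0] with x hx
    simp only [Pi.mul_apply, Pi.one_apply]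
    exact gfun_mul_sphInv (by simpa using hx)
  rw [withDensity_congr_ae hae, withDensity_one]

end Dens

theorem stmt17 {d : ℕ} (R : Measure (Rd d)) (hR : MemMlog R) :
    MemMlog (logInv R) ∧ logInv (logInv R) = R := by
  obtain ⟨h0, h1, h2⟩ := hR
  refine ⟨⟨logInv_apply_zero R h0, ?_, ?_⟩, logInv_logInv R h0⟩
  · have heq : ∫⁻ x, ENNReal.ofReal (min (‖x‖ ^ (2 : ℝ)) 1) ∂(logInv R)
        = ∫⁻ x, phif (sphInv x) * gfun x ∂ R := lintegral_logInv R measurable_phif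
    rw [heq]
    calc ∫⁻ x, phif (sphInv x) * gfun x ∂ R ≤ ∫⁻ x, phif x + psif x ∂ R :=
          lintegral_mono boundA
      _ = (∫⁻ x, phif x ∂ R) + ∫⁻ x, psif x ∂ R := lintegral_add_left measurable_phif _
      _ < ⊤ := by
          apply ENNReal.add_lt_top.2
          constructor
          · exact h1
          · rw [show (∫⁻ x, psif x ∂ R) = ∫⁻ x in {x : Rd d | 1 < ‖x‖},
                ENNReal.ofReal (Real.log ‖x‖) ∂ R from
              lintegral_indicator (measurableSet_lt measurable_const measurable_norm) _]
            exact h2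
  · have heq : ∫⁻ x in {x : Rd d | 1 < ‖x‖}, ENNReal.ofReal (Real.log ‖x‖) ∂(logInv R)
        = ∫⁻ x, psif x ∂(logInv R) :=
      (lintegral_indicator (measurableSet_lt measurable_const measurable_norm) _).symm
    rw [heq, lintegral_logInv R measurable_psif]
    calc ∫⁻ x, psif (sphInv x) * gfun x ∂ R ≤ ∫⁻ x, phif x ∂ R := lintegral_mono boundB
      _ < ⊤ := h1
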